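/- Suppose the weights w_1 > w_2 > ... > w_n ≥ 0 are strictly decreasing and d ≥ n. Then the capacity sequence C° from the optimality construction satisfies Σ_{j=i}^{n} C°_j ≥ d·(w_i + ... + w_n) + b(w^{≥i}) for every i ≥ 2, while Σ_{j=1}^{n} C°_j = d·(w_1 + ... + w_n) + b(w) − 1. -/
import Mathlib

lemma cCirc_key (w : ℕ → ℕ) (C : ℕ → ℤ) (d : ℕ) (i : ℕ) (hi : 2 ≤ i) :
    ∀ n, i ≤ n →
    (∀ j, 2 ≤ j → j ≤ n → C j = (d : ℤ) * w j + ((w (j - 1) : ℤ) - w j - 1)) →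
    ∑ j ∈ Finset.Icc i n, C j =
      (d : ℤ) * (∑ j ∈ Finset.Icc i n, (w j : ℤ)) +
        ((w (i - 1) : ℤ) - w n - ((n : ℤ) - i + 1)) := by
  intro n
  induction n with
  | zero => intro h; omega
  | succ m ih =>
    intro hin hCj
    rcases Nat.lt_or_ge m i with hmi | hmi
    · have : i = m + 1 := by omega
      subst this
      rw [Finset.Icc_self, Finset.sum_singleton, Finset.sum_singleton,
        hCj (m+1) hi le_rfl]
      ring
    · rw [Finset.sum_Icc_succ_top (by omega), Finset.sum_Icc_succ_top (by omega),
        ih hmi (fun j h2 hj => hCj j h2 (by omega)), hCj (m+1) (by omega) le_rfl]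
      push_cast
      ring

/-- for strictly decreasing weights `w_1 > w_2 > ⋯ > w_n ≥ 0` and
`d ≥ n`, the capacity sequence `C°` (which specializes to `C°_1 = d·w_1 − 1` and
`C°_j = d·w_j + (w_{j−1} − w_j − 1)` for `2 ≤ j ≤ n`) satisfies
`Σ_{j=i}^n C°_j ≥ d·(w_i + ⋯ + w_n) + b(w^{≥i})` for every `i ≥ 2`, where
`b(w^{≥i}) = w_i − w_n − (n − i + 1) + 1`, while
`Σ_{j=1}^n C°_j = d·(w_1 + ⋯ + w_n) + b(w) − 1` with `b(w) = w_1 − w_n − n + 1`. -/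
theorem cCirc_distinct_weights
    (n d : ℕ) (hn : 2 ≤ n) (hd : n ≤ d)
    (w : ℕ → ℕ) (C : ℕ → ℤ)
    (hw : ∀ i, 1 ≤ i → i < n → w (i + 1) < w i)
    (hC1 : C 1 = (d : ℤ) * w 1 - 1)
    (hCj : ∀ j, 2 ≤ j → j ≤ n → C j = (d : ℤ) * w j + ((w (j - 1) : ℤ) - w j - 1)) :
    (∀ i, 2 ≤ i → i ≤ n →
      (d : ℤ) * (∑ j ∈ Finset.Icc i n, (w j : ℤ)) +
        ((w i : ℤ) - w n - ((n : ℤ) - i + 1) + 1) ≤ ∑ j ∈ Finset.Icc i n, C j) ∧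
    ∑ j ∈ Finset.Icc 1 n, C j =
      (d : ℤ) * (∑ j ∈ Finset.Icc 1 n, (w j : ℤ)) + ((w 1 : ℤ) - w n - n + 1) - 1 := by
  constructor
  · intro i h2 hin
    rw [cCirc_key w C d i h2 n hin hCj]
    have hlt : w i < w (i - 1) := by
      have := hw (i - 1) (by omega) (by omega)
      have : w (i - 1 + 1) < w (i - 1) := this
      rwa [show i - 1 + 1 = i by omega] at this
    have : (w i : ℤ) + 1 ≤ (w (i - 1) : ℤ) := by exact_mod_cast hlt
    linarith
  · have hsplit : Finset.Icc 1 n = insert 1 (Finset.Icc 2 n) := by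
      ext x; simp [Finset.mem_Icc]; omega
    rw [hsplit, Finset.sum_insert (by simp), Finset.sum_insert (by simp),
      cCirc_key w C d 2 le_rfl n hn hCj, hC1]
    push_cast
    ring
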